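/- Let (A, E) be an exact category satisfying the admissible intersection axiom (AI): the pullback of any two admissible monics exists and consists of admissible monics. Then E contains every kernel-cokernel pair of A, i.e. E = E_all. -/

import Mathlib

open CategoryTheory CategoryTheory.Limits

universe v u

variable {C : Type u} [Category.{v} C] [Preadditive C]

/-- `(i, d)` is a kernel-cokernel pair. -/
structure IsKernelCokernelPair {A B X : C} (i : A ⟶ B) (d : B ⟶ X) : Prop where
  w : i ≫ d = 0
  isKernel : Nonempty (IsLimit (KernelFork.ofι i w))
  isCokernel : Nonempty (IsColimit (CokernelCofork.ofπ d w))

/-- A Quillen exact structure on an additive category. -/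
structure ExactStructure (C : Type u) [Category.{v} C] [Preadditive C] :
    Type (max u v) where
  E : ∀ ⦃A B X : C⦄, (A ⟶ B) → (B ⟶ X) → Prop
  pair : ∀ ⦃A B X : C⦄ {i : A ⟶ B} {d : B ⟶ X}, E i d → IsKernelCokernelPair i d
  iso_closed : ∀ ⦃A B X A' B' X' : C⦄ {i : A ⟶ B} {d : B ⟶ X} {i' : A' ⟶ B'} {d' : B' ⟶ X'}
      (eA : A ≅ A') (eB : B ≅ B') (eX : X ≅ X'),
      E i d → i ≫ eB.hom = eA.hom ≫ i' → d ≫ eX.hom = eB.hom ≫ d' → E i' d'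
  admMono_id : ∀ A : C, ∃ (X : C) (d : A ⟶ X), E (𝟙 A) d
  admEpi_id : ∀ A : C, ∃ (X : C) (i : X ⟶ A), E i (𝟙 A)
  admMono_comp : ∀ ⦃A B D : C⦄ (f : A ⟶ B) (g : B ⟶ D),
      (∃ (X : C) (d : B ⟶ X), E f d) → (∃ (X : C) (d : D ⟶ X), E g d) →
      ∃ (X : C) (d : D ⟶ X), E (f ≫ g) d
  admEpi_comp : ∀ ⦃A B D : C⦄ (f : A ⟶ B) (g : B ⟶ D),
      (∃ (X : C) (i : X ⟶ A), E i f) → (∃ (X : C) (i : X ⟶ B), E i g) →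
      ∃ (X : C) (i : X ⟶ A), E i (f ≫ g)
  pushout_admMono : ∀ ⦃A B Z : C⦄ (i : A ⟶ B) (f : A ⟶ Z),
      (∃ (X : C) (d : B ⟶ X), E i d) →
      ∃ (D : C) (g : B ⟶ D) (j : Z ⟶ D) (w : i ≫ g = f ≫ j),
        Nonempty (IsColimit (PushoutCocone.mk g j w)) ∧ ∃ (X : C) (d : D ⟶ X), E j d
  pullback_admEpi : ∀ ⦃B D Z : C⦄ (h : B ⟶ D) (g : Z ⟶ D),
      (∃ (X : C) (i : X ⟶ B), E i h) →
      ∃ (A : C) (f : A ⟶ B) (k : A ⟶ Z) (w : f ≫ h = k ≫ g),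
        Nonempty (IsLimit (PullbackCone.mk f k w)) ∧ ∃ (X : C) (i : X ⟶ A), E i k

namespace ExactStructure

variable (Ex : ExactStructure C)

/-- `i` is an admissible monic. -/
def AdmMono {A B : C} (i : A ⟶ B) : Prop := ∃ (X : C) (d : B ⟶ X), Ex.E i d

/-- `d` is an admissible epic. -/
def AdmEpi {B X : C} (d : B ⟶ X) : Prop := ∃ (A : C) (i : A ⟶ B), Ex.E i d

/-- `f` is admissible: it factors as an admissible epic followed by an admissible monic. -/
def Admissible {A B : C} (f : A ⟶ B) : Prop :=
  ∃ (Z : C) (e : A ⟶ Z) (m : Z ⟶ B), Ex.AdmEpi e ∧ Ex.AdmMono m ∧ e ≫ m = f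

/-- `E` consists of all kernel-cokernel pairs. -/
def IsMaximalAll : Prop :=
  ∀ ⦃A B X : C⦄ (i : A ⟶ B) (d : B ⟶ X), IsKernelCokernelPair i d → Ex.E i d

/-- `S` is `E`-simple. -/
def ESimple (S : C) : Prop :=
  ¬ IsZero S ∧ ∀ ⦃A : C⦄ (i : A ⟶ S), Ex.AdmMono i → IsZero A ∨ IsIso i

end ExactStructure

/-- `A` is abelian: it has finite products, kernels, cokernels, every mono is normal
and every epi is normal. -/
def IsAbelianCat (C : Type u) [Category.{v} C] [Preadditive C] : Prop :=
  HasFiniteProducts C ∧ HasKernels C ∧ HasCokernels C ∧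
  (∀ ⦃X Y : C⦄ (f : X ⟶ Y), Mono f → Nonempty (NormalMono f)) ∧
  (∀ ⦃X Y : C⦄ (f : X ⟶ Y), Epi f → Nonempty (NormalEpi f))

/-- An admissible (`E`-)subobject of `X`. -/
structure ESub (Ex : ExactStructure C) (X : C) where
  obj : C
  ι : obj ⟶ X
  adm : Ex.AdmMono ι

/-- The order on `E`-subobjects of `X`. -/
def ESubLe (Ex : ExactStructure C) {X : C} (s t : ESub Ex X) : Prop :=
  ∃ h : s.obj ⟶ t.obj, Ex.AdmMono h ∧ h ≫ t.ι = s.ι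

/-- Two `E`-subobjects are isomorphic as subobjects. -/
def ESubEquiv (Ex : ExactStructure C) {X : C} (s t : ESub Ex X) : Prop :=
  ESubLe Ex s t ∧ ESubLe Ex t s

/-- The admissible intersection axiom (AI). -/
def AIAxiom (Ex : ExactStructure C) : Prop :=
  ∀ ⦃B Z D : C⦄ (g : B ⟶ D) (j : Z ⟶ D), Ex.AdmMono g → Ex.AdmMono j →
    ∃ (A : C) (f : A ⟶ B) (f' : A ⟶ Z) (w : f ≫ g = f' ≫ j),
      Ex.AdmMono f ∧ Ex.AdmMono f' ∧ Nonempty (IsLimit (PullbackCone.mk f f' w))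

/-- The admissible sum axiom (AS): for every pullback square of admissible monics,
the induced map from the pushout to the common codomain is an admissible monic. -/
def ASAxiom (Ex : ExactStructure C) : Prop :=
  ∀ ⦃A B Z D : C⦄ (f : A ⟶ B) (f' : A ⟶ Z) (g : B ⟶ D) (j : Z ⟶ D) (w : f ≫ g = f' ≫ j),
    Ex.AdmMono f → Ex.AdmMono f' → Ex.AdmMono g → Ex.AdmMono j →
    IsLimit (PullbackCone.mk f f' w) →
    ∀ ⦃P : C⦄ (l : B ⟶ P) (k : Z ⟶ P) (w' : f ≫ l = f' ≫ k),
      IsColimit (PushoutCocone.mk l k w') →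
      ∀ u : P ⟶ D, l ≫ u = g → k ≫ u = j → Ex.AdmMono u

/-- An AIS-category: an AI-category satisfying the admissible sum axiom. -/
def AISCat (Ex : ExactStructure C) : Prop := AIAxiom Ex ∧ ASAxiom Ex

/-- `f` is a kernel of some morphism. -/
def IsKernelMor {A B : C} (f : A ⟶ B) : Prop :=
  ∃ (Z : C) (g : B ⟶ Z) (w : f ≫ g = 0), Nonempty (IsLimit (KernelFork.ofι f w))

/-- `f` is a cokernel of some morphism. -/
def IsCokernelMor {A B : C} (f : A ⟶ B) : Prop :=
  ∃ (Z : C) (g : Z ⟶ A) (w : g ≫ f = 0), Nonempty (IsColimit (CokernelCofork.ofπ f w))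

/-- A quasi-abelian category: pre-abelian, kernels are stable under pushout and
cokernels are stable under pullback. -/
def IsQuasiAbelian (C : Type u) [Category.{v} C] [Preadditive C] : Prop :=
  HasKernels C ∧ HasCokernels C ∧
  (∀ ⦃A B Z : C⦄ (f : A ⟶ B) (t : A ⟶ Z), IsKernelMor f →
    ∀ ⦃P : C⦄ (s : B ⟶ P) (s' : Z ⟶ P) (w : f ≫ s = t ≫ s'),
      IsColimit (PushoutCocone.mk s s' w) → IsKernelMor s') ∧
  (∀ ⦃A B Z : C⦄ (f : B ⟶ A) (t : Z ⟶ A), IsCokernelMor f →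
    ∀ ⦃P : C⦄ (s : P ⟶ B) (s' : P ⟶ Z) (w : s ≫ f = s' ≫ t),
      IsLimit (PullbackCone.mk s s' w) → IsCokernelMor s')

/-- An `E`-composition series of length `n` for `X`. -/
structure CompSeries (Ex : ExactStructure C) (X : C) (n : ℕ) where
  obj : Fin (n + 1) → C
  map : ∀ i : Fin n, obj i.castSucc ⟶ obj i.succ
  zero : IsZero (obj 0)
  top : obj (Fin.last n) ≅ X
  adm : ∀ i : Fin n, Ex.AdmMono (map i)
  simpleFactor : ∀ i : Fin n,
    ∃ (Q : C) (d : obj i.succ ⟶ Q), Ex.E (map i) d ∧ Ex.ESimple Q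

/-- Two composition series are equivalent: there is a bijection of indices matching
isomorphic composition factors. -/
def CompSeries.EquivSeries {Ex : ExactStructure C} {X : C} {n m : ℕ}
    (s : CompSeries Ex X n) (t : CompSeries Ex X m) : Prop :=
  ∃ σ : Fin n ≃ Fin m, ∀ (i : Fin n) ⦃Q Q' : C⦄
    (d : s.obj i.succ ⟶ Q) (d' : t.obj (σ i).succ ⟶ Q'),
    Ex.E (s.map i) d → Ex.E (t.map (σ i)) d' → Nonempty (Q ≅ Q')

/-- The Jordan-Hölder property for an exact structure. -/
def JordanHolder (Ex : ExactStructure C) : Prop :=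
  ∀ (X : C) (n m : ℕ) (s : CompSeries Ex X n) (t : CompSeries Ex X m),
    n = m ∧ s.EquivSeries t

/-- A maximal `E`-subobject: one with `E`-simple cokernel. -/
def ESub.IsMax {Ex : ExactStructure C} {X : C} (A : ESub Ex X) : Prop :=
  ∃ (Q : C) (d : X ⟶ Q), Ex.E A.ι d ∧ Ex.ESimple Q

/-- `Y` belongs to the generalized intersection `Int_X(A, B)`: it is a maximal common
`E`-subobject of `A` and `B`. -/
def InInt {Ex : ExactStructure C} {X : C} (A B Y : ESub Ex X) : Prop :=
  ESubLe Ex Y A ∧ ESubLe Ex Y B ∧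
  ∀ Z : ESub Ex X, ESubLe Ex Z A → ESubLe Ex Z B → ESubLe Ex Y Z → ESubLe Ex Z Y

/-- A diamond exact category. -/
def DiamondCat (Ex : ExactStructure C) : Prop :=
  ∀ (X : C) (A B : ESub Ex X), A.IsMax → B.IsMax → ¬ ESubEquiv Ex A B →
    ∀ Y : ESub Ex X, InInt A B Y →
      (∀ (h : Y.obj ⟶ A.obj), Ex.AdmMono h → h ≫ A.ι = Y.ι →
        ∀ ⦃Q : C⦄ (d : A.obj ⟶ Q), Ex.E h d → Ex.ESimple Q) ∧
      (∀ (h : Y.obj ⟶ B.obj), Ex.AdmMono h → h ≫ B.ι = Y.ι →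
        ∀ ⦃Q : C⦄ (d : B.obj ⟶ Q), Ex.E h d → Ex.ESimple Q) ∧
      (∀ (hA : Y.obj ⟶ A.obj) (hB : Y.obj ⟶ B.obj), Ex.AdmMono hA → Ex.AdmMono hB →
        hA ≫ A.ι = Y.ι → hB ≫ B.ι = Y.ι →
        ∀ ⦃QXA QAY QXB QBY : C⦄
          (dXA : X ⟶ QXA) (dAY : A.obj ⟶ QAY) (dXB : X ⟶ QXB) (dBY : B.obj ⟶ QBY),
          Ex.E A.ι dXA → Ex.E hA dAY → Ex.E B.ι dXB → Ex.E hB dBY →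
          (Nonempty (QXA ≅ QXB) ∧ Nonempty (QAY ≅ QBY)) ∨
          (Nonempty (QXA ≅ QBY) ∧ Nonempty (QAY ≅ QXB)))

section Aux

lemma aux_mono_of_admMono (Ex : ExactStructure C) {A B : C} {i : A ⟶ B}
    (h : Ex.AdmMono i) : Mono i := by
  obtain ⟨Q, d, hE⟩ := h
  have hp := Ex.pair hE
  have := mono_of_isLimit_fork hp.isKernel.some
  simpa using this

lemma aux_admMono_zero_from (Ex : ExactStructure C) {Z B : C} (hZ : IsZero Z) :
    Ex.AdmMono (0 : Z ⟶ B) := by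
  obtain ⟨X0, i, hi⟩ := Ex.admEpi_id B
  have hp := Ex.pair hi
  have hi0 : i = 0 := by simpa using hp.w
  have hm : Mono i := by
    have := mono_of_isLimit_fork hp.isKernel.some
    simpa using this
  have hX0 : IsZero X0 := by
    rw [IsZero.iff_id_eq_zero, ← cancel_mono i]
    simp [hi0]
  refine ⟨B, 𝟙 B, Ex.iso_closed (hX0.iso hZ) (Iso.refl B) (Iso.refl B) hi ?_ ?_⟩
  · simp [hi0]
  · simp

end Aux

/-- An exact category on a pre-abelian category satisfying the admissible intersection
axiom (AI) contains every kernel-cokernel pair, i.e. `E = E_all`. -/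
theorem stmt7 [HasKernels C] [HasCokernels C] (Ex : ExactStructure C)
    (hAI : AIAxiom Ex) : Ex.IsMaximalAll := by
  intro A B X f h hpair
  obtain ⟨w0, ⟨hker⟩, ⟨hcoker⟩⟩ := hpair
  have hf_mono : Mono f := by
    have := mono_of_isLimit_fork hker
    simpa using this
  -- a zero object
  set Z := kernel (𝟙 B) with hZdef
  have hZι : (kernel.ι (𝟙 B) : Z ⟶ B) = 0 := by
    have := kernel.condition (𝟙 B)
    simpa using this
  have hZ : IsZero Z := by
    rw [IsZero.iff_id_eq_zero, ← cancel_mono (kernel.ι (𝟙 B))]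
    simp [hZι]
  -- the "biproduct" B ⊕ X as a pushout over the zero object
  obtain ⟨D, g, j, wD, ⟨hD⟩, hj⟩ :=
    Ex.pushout_admMono (0 : Z ⟶ B) (0 : Z ⟶ X) (aux_admMono_zero_from Ex hZ)
  obtain ⟨D₂, g₂, j₂, wD₂, ⟨hD₂⟩, hj₂⟩ :=
    Ex.pushout_admMono (0 : Z ⟶ X) (0 : Z ⟶ B) (aux_admMono_zero_from Ex hZ)
  -- comparison isos between the two pushouts
  let α : D₂ ⟶ D := PushoutCocone.IsColimit.desc hD₂ j g (by simp)
  let β : D ⟶ D₂ := PushoutCocone.IsColimit.desc hD j₂ g₂ (by simp)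
  have hg₂α : g₂ ≫ α = j := by exact PushoutCocone.IsColimit.inl_desc hD₂ j g _
  have hj₂α : j₂ ≫ α = g := by exact PushoutCocone.IsColimit.inr_desc hD₂ j g _
  have hgβ : g ≫ β = j₂ := by exact PushoutCocone.IsColimit.inl_desc hD j₂ g₂ _
  have hjβ : j ≫ β = g₂ := by exact PushoutCocone.IsColimit.inr_desc hD j₂ g₂ _
  have hαβ : α ≫ β = 𝟙 D₂ := by
    refine PushoutCocone.IsColimit.hom_ext hD₂ ?_ ?_
    · show g₂ ≫ α ≫ β = g₂ ≫ 𝟙 D₂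
      rw [reassoc_of% hg₂α, hjβ, Category.comp_id]
    · show j₂ ≫ α ≫ β = j₂ ≫ 𝟙 D₂
      rw [reassoc_of% hj₂α, hgβ, Category.comp_id]
  have hβα : β ≫ α = 𝟙 D := by
    refine PushoutCocone.IsColimit.hom_ext hD ?_ ?_
    · show g ≫ β ≫ α = g ≫ 𝟙 D
      rw [reassoc_of% hgβ, hj₂α, Category.comp_id]
    · show j ≫ β ≫ α = j ≫ 𝟙 D
      rw [reassoc_of% hjβ, hg₂α, Category.comp_id]
  -- g : B ⟶ D is an admissible monic
  have hg : Ex.AdmMono g := by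
    obtain ⟨Q, d, hE⟩ := hj₂
    refine ⟨Q, β ≫ d, Ex.iso_closed (Iso.refl B) ⟨α, β, hαβ, hβα⟩ (Iso.refl Q) hE ?_ ?_⟩
    · simpa using hj₂α
    · show d ≫ 𝟙 Q = α ≫ β ≫ d
      rw [← Category.assoc, hαβ]
      simp
  -- the projection p : D ⟶ B
  let p : D ⟶ B := PushoutCocone.IsColimit.desc hD (𝟙 B) 0 (by simp)
  have hgp : g ≫ p = 𝟙 B := by
    exact PushoutCocone.IsColimit.inl_desc hD (𝟙 B) 0 _
  have hjp : j ≫ p = (0 : X ⟶ B) := by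
    exact PushoutCocone.IsColimit.inr_desc hD (𝟙 B) 0 _
  have hj_mono : Mono j := aux_mono_of_admMono Ex hj
  -- the second section m₂ = [1, h] : B ⟶ D
  set m₂ : B ⟶ D := g + h ≫ j with hm₂def
  -- the automorphism φ of D
  set φ : D ⟶ D := 𝟙 D + p ≫ h ≫ j with hφdef
  set ψ : D ⟶ D := 𝟙 D - p ≫ h ≫ j with hψdef
  have key : (p ≫ h ≫ j) ≫ p ≫ h ≫ j = 0 := by
    simp [reassoc_of% hjp]
  have hφψ : φ ≫ ψ = 𝟙 D := by
    simp only [hφdef, hψdef, Preadditive.add_comp, Preadditive.comp_sub, Category.id_comp,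
      Category.comp_id, key]
    abel
  have hψφ : ψ ≫ φ = 𝟙 D := by
    simp only [hφdef, hψdef, Preadditive.sub_comp, Preadditive.comp_add, Category.id_comp,
      Category.comp_id, key]
    abel
  have hgφ : g ≫ φ = m₂ := by
    simp [hφdef, hm₂def, Preadditive.comp_add, reassoc_of% hgp]
  -- m₂ is an admissible monic
  have hm₂ : Ex.AdmMono m₂ := by
    obtain ⟨Q, d, hE⟩ := hg
    refine ⟨Q, ψ ≫ d, Ex.iso_closed (Iso.refl B) ⟨φ, ψ, hφψ, hψφ⟩ (Iso.refl Q) hE ?_ ?_⟩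
    · simpa using hgφ
    · show d ≫ 𝟙 Q = φ ≫ ψ ≫ d
      rw [← Category.assoc, hφψ]
      simp
  have hmp : m₂ ≫ p = 𝟙 B := by
    simp [hm₂def, Preadditive.add_comp, Category.assoc, hgp, hjp]
  -- apply the AI axiom to m₂ and g
  obtain ⟨P, u, v, wP, hu, _, ⟨hP⟩⟩ := hAI m₂ g hm₂ hg
  -- A with (f, f) is also a pullback of (m₂, g)
  have wA : f ≫ m₂ = f ≫ g := by
    simp [hm₂def, Preadditive.comp_add, reassoc_of% w0]
  have heq : ∀ s : PullbackCone m₂ g, s.fst = s.snd := fun s => by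
    calc s.fst = s.fst ≫ m₂ ≫ p := by rw [hmp]; simp
      _ = (s.fst ≫ m₂) ≫ p := by rw [Category.assoc]
      _ = (s.snd ≫ g) ≫ p := by rw [s.condition]
      _ = s.snd := by rw [Category.assoc, hgp]; simp
  have hsh : ∀ s : PullbackCone m₂ g, s.fst ≫ h = 0 := fun s => by
    have hc := s.condition
    rw [← heq s] at hc
    have h2 : s.fst ≫ h ≫ j = 0 := by
      have := sub_eq_zero.mpr hc
      simpa [hm₂def, Preadditive.comp_add, add_sub_cancel_left] using this
    rw [← cancel_mono j]
    simpa using h2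
  have hA : IsLimit (PullbackCone.mk f f wA) := by
    refine PullbackCone.IsLimit.mk wA
      (fun s => (KernelFork.IsLimit.lift' hker s.fst (hsh s)).1)
      (fun s => by simpa using (KernelFork.IsLimit.lift' hker s.fst (hsh s)).2)
      (fun s => by rw [← heq s]; simpa using (KernelFork.IsLimit.lift' hker s.fst (hsh s)).2)
      (fun s m hm1 _ => by
        rw [← cancel_mono f]
        have h2 := (KernelFork.IsLimit.lift' hker s.fst (hsh s)).2
        simp at h2 hm1 ⊢
        rw [hm1, h2])
  -- transfer: f is an admissible monic
  let e : A ≅ P := hA.conePointUniqueUpToIso hP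
  have hef : e.hom ≫ u = f := by
    have := hA.conePointUniqueUpToIso_hom_comp hP WalkingCospan.left
    exact this
  have hf_adm : Ex.AdmMono f := by
    obtain ⟨Q, d, hE⟩ := hu
    refine ⟨Q, d, Ex.iso_closed e.symm (Iso.refl B) (Iso.refl Q) hE ?_ ?_⟩
    · show u ≫ 𝟙 B = e.inv ≫ f
      rw [Category.comp_id, ← hef, Iso.inv_hom_id_assoc]
    · simp
  -- finally, transfer along the uniqueness of cokernels
  obtain ⟨Q, d, hE⟩ := hf_adm
  have hp := Ex.pair hE
  obtain ⟨hcoker'⟩ := hp.isCokernel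
  let eX : Q ≅ X := hcoker'.coconePointUniqueUpToIso hcoker
  have hdX : d ≫ eX.hom = h := by
    have := hcoker'.comp_coconePointUniqueUpToIso_hom hcoker WalkingParallelPair.one
    simpa [eX] using this
  refine Ex.iso_closed (Iso.refl A) (Iso.refl B) eX hE (by simp) ?_
  simpa using hdX
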